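/- Let H and K be separable complex Hilbert spaces, and let A (on H) and B (on K) be bounded positive injective self-adjoint operators that are diagonalizable, i.e. H (resp. K) has an orthonormal basis of eigenvectors of A (resp. B). Fix μ > 0. Then every vector ξ in the Hilbert space tensor product H ⊗ K satisfying (A ⊗ B)ξ = μ ξ lies in the closed linear span of the set of elementary tensors v ⊗ w where v is an eigenvector of A with eigenvalue s, w is an eigenvector of B with eigenvalue t, and s·t = μ. -/

import Mathlib

open scoped InnerProductSpace

/-- A continuous linear functional vanishing on a set with dense span vanishes. -/
private lemma dense_ker_zero {F : Type*} [NormedAddCommGroup F] [NormedSpace ℂ F]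
    (f : F →L[ℂ] ℂ) (S : Set F)
    (hS : closure ((Submodule.span ℂ S : Submodule ℂ F) : Set F) = Set.univ)
    (h0 : ∀ x ∈ S, f x = 0) (x : F) : f x = 0 := by
  have hker : ((Submodule.span ℂ S : Submodule ℂ F) : Set F) ⊆ (f.ker : Set F) := by
    intro y hy
    exact Submodule.span_le.mpr (fun z hz => h0 z hz) hy
  have hclosed : IsClosed (f.ker : Set F) := ContinuousLinearMap.isClosed_ker f
  have huniv : (Set.univ : Set F) ⊆ (f.ker : Set F) := by
    rw [← hS]
    exact hclosed.closure_subset_iff.mpr hker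
  exact huniv (Set.mem_univ x)

/-- If `x` is orthogonal to every element of a submodule, it is orthogonal to its closure. -/
private lemma orth_closure {F : Type*} [NormedAddCommGroup F] [InnerProductSpace ℂ F]
    {V : Submodule ℂ F} {x : F} (h : ∀ u ∈ V, ⟪u, x⟫_ℂ = 0) :
    ∀ u ∈ V.topologicalClosure, ⟪u, x⟫_ℂ = 0 := by
  intro u hu
  have hcl : IsClosed {u : F | ⟪u, x⟫_ℂ = 0} := by
    have : Continuous fun u : F => ⟪u, x⟫_ℂ := Continuous.inner continuous_id continuous_const
    exact isClosed_eq this continuous_const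
  have hsub : (V : Set F) ⊆ {u : F | ⟪u, x⟫_ℂ = 0} := fun u hu => h u hu
  have hsub2 : (V.topologicalClosure : Set F) ⊆ {u : F | ⟪u, x⟫_ℂ = 0} := by
    rw [Submodule.topologicalClosure_coe]
    exact closure_minimal hsub hcl
  exact hsub2 hu

theorem stmt0
    {H K E : Type*}
    [NormedAddCommGroup H] [InnerProductSpace ℂ H] [CompleteSpace H]
    [TopologicalSpace.SeparableSpace H]
    [NormedAddCommGroup K] [InnerProductSpace ℂ K] [CompleteSpace K]
    [TopologicalSpace.SeparableSpace K]
    [NormedAddCommGroup E] [InnerProductSpace ℂ E] [CompleteSpace E]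
    (tensor : H →ₗ[ℂ] K →ₗ[ℂ] E)
    (htensor_inner : ∀ (v v' : H) (w w' : K),
      ⟪tensor v w, tensor v' w'⟫_ℂ = ⟪v, v'⟫_ℂ * ⟪w, w'⟫_ℂ)
    (htensor_dense :
      closure ((Submodule.span ℂ {x : E | ∃ v w, x = tensor v w} : Submodule ℂ E) : Set E) = Set.univ)
    (A : H →L[ℂ] H) (B : K →L[ℂ] K) (AB : E →L[ℂ] E)
    (hA : IsSelfAdjoint A) (hB : IsSelfAdjoint B)
    (hApos : ∀ v : H, 0 ≤ (⟪A v, v⟫_ℂ).re) (hBpos : ∀ w : K, 0 ≤ (⟪B w, w⟫_ℂ).re)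
    (hAinj : Function.Injective A) (hBinj : Function.Injective B)
    (hAdiag :
      closure ((Submodule.span ℂ {v : H | ∃ s : ℝ, v ≠ 0 ∧ A v = (s : ℂ) • v} : Submodule ℂ H) : Set H)
        = Set.univ)
    (hBdiag :
      closure ((Submodule.span ℂ {w : K | ∃ t : ℝ, w ≠ 0 ∧ B w = (t : ℂ) • w} : Submodule ℂ K) : Set K)
        = Set.univ)
    (hAB : ∀ (v : H) (w : K), AB (tensor v w) = tensor (A v) (B w))
    (μ : ℝ) (hμ : 0 < μ)
    (ξ : E) (hξ : AB ξ = (μ : ℂ) • ξ) :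
    ξ ∈ closure ((Submodule.span ℂ
      {x : E | ∃ (v : H) (w : K) (s t : ℝ), s * t = μ ∧ v ≠ 0 ∧ w ≠ 0 ∧
        A v = (s : ℂ) • v ∧ B w = (t : ℂ) • w ∧ x = tensor v w} : Submodule ℂ E) : Set E) := by
  classical
  set M : Set E := {x : E | ∃ (v : H) (w : K) (s t : ℝ), s * t = μ ∧ v ≠ 0 ∧ w ≠ 0 ∧
        A v = (s : ℂ) • v ∧ B w = (t : ℂ) • w ∧ x = tensor v w} with hMdef
  -- norm of elementary tensors
  have hTnorm : ∀ (v : H) (w : K), ‖tensor v w‖ = ‖v‖ * ‖w‖ := by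
    intro v w
    have h1 : ⟪tensor v w, tensor v w⟫_ℂ = ⟪v, v⟫_ℂ * ⟪w, w⟫_ℂ := htensor_inner v v w w
    rw [inner_self_eq_norm_sq_to_K, inner_self_eq_norm_sq_to_K, inner_self_eq_norm_sq_to_K] at h1
    have h3 : (‖tensor v w‖ : ℝ) ^ 2 = ‖v‖ ^ 2 * ‖w‖ ^ 2 := by exact_mod_cast h1
    calc ‖tensor v w‖ = Real.sqrt (‖tensor v w‖ ^ 2) := (Real.sqrt_sq (norm_nonneg _)).symm
      _ = Real.sqrt ((‖v‖ * ‖w‖) ^ 2) := by rw [h3, mul_pow]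
      _ = ‖v‖ * ‖w‖ := Real.sqrt_sq (by positivity)
  -- the action of AB on an elementary eigentensor
  have hABeig : ∀ (v : H) (w : K) (s t : ℝ), A v = (s : ℂ) • v → B w = (t : ℂ) • w →
      AB (tensor v w) = ((s * t : ℝ) : ℂ) • tensor v w := by
    intro v w s t hv hw
    rw [hAB, hv, hw, map_smul, map_smul, LinearMap.smul_apply, smul_smul]
    congr 1
    push_cast
    ring
  have hAsym : ∀ x y : H, ⟪A x, y⟫_ℂ = ⟪x, A y⟫_ℂ := fun x y => hA.isSymmetric x y
  have hBsym : ∀ x y : K, ⟪B x, y⟫_ℂ = ⟪x, B y⟫_ℂ := fun x y => hB.isSymmetric x y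
  -- AB is symmetric (on the whole space, by density)
  have hABsym : ∀ (v : H) (w : K) (y : E),
      ⟪AB (tensor v w), y⟫_ℂ = ⟪tensor v w, AB y⟫_ℂ := by
    intro v w y
    set f : E →L[ℂ] ℂ :=
      innerSL ℂ (AB (tensor v w)) - (innerSL ℂ (tensor v w)).comp AB with hf
    have h0 : ∀ x ∈ {x : E | ∃ v' w', x = tensor v' w'}, f x = 0 := by
      rintro x ⟨v', w', rfl⟩
      simp only [hf, ContinuousLinearMap.sub_apply, ContinuousLinearMap.comp_apply,
        innerSL_apply_apply]
      rw [hAB, hAB, htensor_inner, htensor_inner, hAsym v v', hBsym w w']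
      ring
    have := dense_ker_zero f _ htensor_dense h0 y
    simpa only [hf, ContinuousLinearMap.sub_apply, ContinuousLinearMap.comp_apply,
      innerSL_apply_apply, sub_eq_zero] using this
  -- key: ξ is orthogonal to eigentensors whose eigenvalue product is not μ
  have hkey : ∀ (v : H) (w : K) (s t : ℝ), A v = (s : ℂ) • v → B w = (t : ℂ) • w →
      s * t ≠ μ → ⟪tensor v w, ξ⟫_ℂ = 0 := by
    intro v w s t hv hw hst
    have h1 : ⟪AB (tensor v w), ξ⟫_ℂ = ((s * t : ℝ) : ℂ) * ⟪tensor v w, ξ⟫_ℂ := by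
      rw [hABeig v w s t hv hw, inner_smul_left, Complex.conj_ofReal]
    have h2 : ⟪AB (tensor v w), ξ⟫_ℂ = ((μ : ℝ) : ℂ) * ⟪tensor v w, ξ⟫_ℂ := by
      rw [hABsym, hξ, inner_smul_right]
    have h3 : (((s * t : ℝ) : ℂ) - ((μ : ℝ) : ℂ)) * ⟪tensor v w, ξ⟫_ℂ = 0 := by
      rw [sub_mul, ← h1, ← h2, sub_self]
    rcases mul_eq_zero.mp h3 with h | h
    · exact absurd (by exact_mod_cast sub_eq_zero.mp h) hst
    · exact h
  -- orthogonality of eigenvectors with distinct eigenvalues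
  have horthA : ∀ (v v' : H) (s s' : ℝ), s ≠ s' → A v = (s : ℂ) • v → A v' = (s' : ℂ) • v' →
      ⟪v, v'⟫_ℂ = 0 := by
    intro v v' s s' hss hv hv'
    have h1 : ⟪A v, v'⟫_ℂ = ⟪v, A v'⟫_ℂ := hAsym v v'
    rw [hv, hv', inner_smul_left, inner_smul_right, Complex.conj_ofReal] at h1
    have h2 : (((s : ℂ)) - (s' : ℂ)) * ⟪v, v'⟫_ℂ = 0 := by rw [sub_mul, h1, sub_self]
    rcases mul_eq_zero.mp h2 with h | h
    · exact absurd (by exact_mod_cast sub_eq_zero.mp h) hss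
    · exact h
  have horthB : ∀ (w w' : K) (t t' : ℝ), t ≠ t' → B w = (t : ℂ) • w → B w' = (t' : ℂ) • w' →
      ⟪w, w'⟫_ℂ = 0 := by
    intro w w' t t' htt hw hw'
    have h1 : ⟪B w, w'⟫_ℂ = ⟪w, B w'⟫_ℂ := hBsym w w'
    rw [hw, hw', inner_smul_left, inner_smul_right, Complex.conj_ofReal] at h1
    have h2 : (((t : ℂ)) - (t' : ℂ)) * ⟪w, w'⟫_ℂ = 0 := by rw [sub_mul, h1, sub_self]
    rcases mul_eq_zero.mp h2 with h | h
    · exact absurd (by exact_mod_cast sub_eq_zero.mp h) htt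
    · exact h
  -- the closed span of M
  set V : Submodule ℂ E := (Submodule.span ℂ M).topologicalClosure with hV
  haveI : CompleteSpace V :=
    (Submodule.isClosed_topologicalClosure _).completeSpace_coe
  set P := V.orthogonalProjection with hP
  set ξ' : E := ξ - (P ξ : E) with hξ'
  have hξ'mem : ξ' ∈ Vᗮ := Submodule.sub_starProjection_mem_orthogonal ξ
  -- eigentensors with product ≠ μ are orthogonal to M (hence to V)
  have hNorth : ∀ (v : H) (w : K) (s t : ℝ), A v = (s : ℂ) • v → B w = (t : ℂ) • w →
      s * t ≠ μ → ∀ u ∈ V, ⟪u, tensor v w⟫_ℂ = 0 := by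
    intro v w s t hv hw hst
    apply orth_closure
    intro u hu
    induction hu using Submodule.span_induction with
    | mem x hx =>
      obtain ⟨v', w', s', t', hst', hv'0, hw'0, hv', hw', rfl⟩ := hx
      rw [htensor_inner]
      by_cases hss : s' = s
      · -- then t' ≠ t since s' * t' = μ ≠ s * t and s' ≠ 0
        have hs'0 : s' ≠ 0 := by
          intro h
          rw [h, zero_mul] at hst'
          exact absurd hst'.symm (ne_of_gt hμ)
        have htt : t' ≠ t := by
          intro h
          rw [hss, h] at hst'
          exact hst hst'
        rw [horthB w' w t' t htt hw' hw, mul_zero]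
      · rw [horthA v' v s' s hss hv' hv, zero_mul]
    | zero => exact inner_zero_left _
    | add x y _ _ hx hy => rw [inner_add_left, hx, hy, add_zero]
    | smul c x _ hx => rw [inner_smul_left, hx, mul_zero]
  -- ξ' is orthogonal to all eigentensors
  have hperp : ∀ (v : H) (w : K) (s t : ℝ), v ≠ 0 → w ≠ 0 →
      A v = (s : ℂ) • v → B w = (t : ℂ) • w → ⟪ξ', tensor v w⟫_ℂ = 0 := by
    intro v w s t hv0 hw0 hv hw
    by_cases hst : s * t = μ
    · have hmem : tensor v w ∈ V := by
        apply Submodule.le_topologicalClosure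
        exact Submodule.subset_span ⟨v, w, s, t, hst, hv0, hw0, hv, hw, rfl⟩
      exact (Submodule.mem_orthogonal' V ξ').mp hξ'mem _ hmem
    · have h1 : ⟪tensor v w, ξ⟫_ℂ = 0 := hkey v w s t hv hw hst
      have h2 : ⟪(P ξ : E), tensor v w⟫_ℂ = 0 :=
        hNorth v w s t hv hw hst _ (P ξ).2
      have h3 : ⟪tensor v w, (P ξ : E)⟫_ℂ = 0 := by
        rw [← inner_conj_symm, h2, map_zero]
      have : ⟪tensor v w, ξ'⟫_ℂ = 0 := by
        rw [hξ', inner_sub_right, h1, h3, sub_zero]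
      rw [← inner_conj_symm, this, map_zero]
  -- continuous linear maps induced by tensor
  have hTv : ∀ v : H, ∃ Tv : K →L[ℂ] E, ∀ w, Tv w = tensor v w := by
    intro v
    refine ⟨LinearMap.mkContinuous (tensor v) ‖v‖ (fun w => ?_), fun w => rfl⟩
    rw [hTnorm]
  have hTw : ∀ w : K, ∃ Tw : H →L[ℂ] E, ∀ v, Tw v = tensor v w := by
    intro w
    refine ⟨LinearMap.mkContinuous (tensor.flip w) ‖w‖ (fun v => ?_), fun v => rfl⟩
    simp only [LinearMap.flip_apply]
    rw [hTnorm, mul_comm]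
  -- step A: ξ' ⊥ tensor v w for v an eigenvector, w arbitrary
  have hstepA : ∀ (v : H) (s : ℝ), v ≠ 0 → A v = (s : ℂ) • v →
      ∀ w : K, ⟪ξ', tensor v w⟫_ℂ = 0 := by
    intro v s hv0 hv w
    obtain ⟨Tv, hTveq⟩ := hTv v
    have := dense_ker_zero ((innerSL ℂ ξ').comp Tv) _ hBdiag ?_ w
    · simpa only [ContinuousLinearMap.comp_apply, innerSL_apply_apply, hTveq] using this
    · rintro w' ⟨t, hw'0, hw'⟩
      simpa only [ContinuousLinearMap.comp_apply, innerSL_apply_apply, hTveq] using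
        hperp v w' s t hv0 hw'0 hv hw'
  -- step B: ξ' ⊥ tensor v w for all v, w
  have hstepB : ∀ (v : H) (w : K), ⟪ξ', tensor v w⟫_ℂ = 0 := by
    intro v w
    obtain ⟨Tw, hTweq⟩ := hTw w
    have := dense_ker_zero ((innerSL ℂ ξ').comp Tw) _ hAdiag ?_ v
    · simpa only [ContinuousLinearMap.comp_apply, innerSL_apply_apply, hTweq] using this
    · rintro v' ⟨s, hv'0, hv'⟩
      simpa only [ContinuousLinearMap.comp_apply, innerSL_apply_apply, hTweq] using
        hstepA v' s hv'0 hv' w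
  -- step C: ξ' = 0
  have hξ'0 : ξ' = 0 := by
    have := dense_ker_zero (innerSL ℂ ξ') _ htensor_dense ?_ ξ'
    · simpa only [innerSL_apply_apply, inner_self_eq_zero] using this
    · rintro x ⟨v, w, rfl⟩
      simpa only [innerSL_apply_apply] using hstepB v w
  -- conclude
  have hmem : ξ ∈ V := by
    have : ξ = (P ξ : E) := by
      have := sub_eq_zero.mp (hξ' ▸ hξ'0)
      exact this
    rw [this]
    exact (P ξ).2
  have : (V : Set E) = closure ((Submodule.span ℂ M : Submodule ℂ E) : Set E) :=
    Submodule.topologicalClosure_coe _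
  rw [← this]
  exact hmem
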